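/- Let p > 3 be a prime, θ a nontrivial additive character of F_p with values in ℂ, and λ ∈ F_p with λ ≠ 0. Then, as complex numbers, p · #{(x, y) ∈ F_p × F_p : y² = x³ + 3λ(x + 1)²} = p² + p·φ(3λ) + (φ(−3λ)·g(φ)/(p−1)²) · Σ_{A,B} g(A⁻¹)·g(B⁻¹)·g(A³B²)·g(A⁻²B⁻¹φ)·(A³B²)⁻¹(2)·A⁻¹(3λ), where the sum runs over all pairs (A, B) of multiplicative characters of F_p. -/

import Mathlib

open Finset

lemma aux_count (p : ℕ) [Fact p.Prime] (hp : 3 < p) (l : ZMod p) :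
    ((Finset.univ.filter (fun xy : ZMod p × ZMod p =>
        xy.2 ^ 2 = xy.1 ^ 3 + 3 * l * (xy.1 + 1) ^ 2)).card : ℂ) =
      (p : ℂ) + ∑ x : ZMod p,
        ((quadraticChar (ZMod p)).ringHomComp (Int.castRingHom ℂ)) (x ^ 3 + 3 * l * (x + 1) ^ 2) := by
  have h2 : ringChar (ZMod p) ≠ 2 := by rw [ZMod.ringChar_zmod_n]; omega
  have hfib : (Finset.univ.filter (fun xy : ZMod p × ZMod p =>
      xy.2 ^ 2 = xy.1 ^ 3 + 3 * l * (xy.1 + 1) ^ 2)).card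
      = ∑ x : ZMod p, (Finset.univ.filter
          (fun y : ZMod p => y ^ 2 = x ^ 3 + 3 * l * (x + 1) ^ 2)).card := by
    rw [Finset.card_eq_sum_card_fiberwise (f := Prod.fst) (t := Finset.univ)
      (fun x _ => Finset.mem_univ _)]
    refine Finset.sum_congr rfl fun x _ => ?_
    refine Finset.card_nbij' (fun xy => xy.2) (fun y => (x, y)) ?_ ?_ ?_ ?_ <;>
      simp +contextual [Finset.mem_filter, Set.MapsTo, Set.LeftInvOn, Set.RightInvOn] <;> intros <;> simp_all
  have hy : ∀ x : ZMod p, ((Finset.univ.filter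
      (fun y : ZMod p => y ^ 2 = x ^ 3 + 3 * l * (x + 1) ^ 2)).card : ℂ)
      = ((quadraticChar (ZMod p)).ringHomComp (Int.castRingHom ℂ)) (x ^ 3 + 3 * l * (x + 1) ^ 2)
        + 1 := by
    intro x
    have h := quadraticChar_card_sqrts h2 (x ^ 3 + 3 * l * (x + 1) ^ 2)
    rw [Set.toFinset_setOf] at h
    have h' : (((Finset.univ.filter
        (fun y : ZMod p => y ^ 2 = x ^ 3 + 3 * l * (x + 1) ^ 2)).card : ℤ) : ℂ)
        = ((quadraticChar (ZMod p) (x ^ 3 + 3 * l * (x + 1) ^ 2) + 1 : ℤ) : ℂ) := by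
      rw [← h]
    push_cast at h'
    rw [h']
    simp [MulChar.ringHomComp]
  rw [hfib]
  push_cast
  rw [Finset.sum_congr rfl (fun x _ => hy x), Finset.sum_add_distrib]
  simp [add_comm]

private lemma sum_swap8 {M F : Type*} [Fintype M] [Fintype F]
    (f : M → M → F → F → F → F → ℂ) :
    ∑ A : M, ∑ B : M, ∑ w : F, ∑ v : F, ∑ u : F, ∑ t : F, f A B w v u t
      = ∑ w : F, ∑ v : F, ∑ u : F, ∑ t : F, ∑ A : M, ∑ B : M, f A B w v u t := by
  conv_lhs => enter [2, A]; rw [Finset.sum_comm]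
  rw [Finset.sum_comm]
  conv_lhs => enter [2, w, 2, A]; rw [Finset.sum_comm]
  conv_lhs => enter [2, w]; rw [Finset.sum_comm]
  conv_lhs => enter [2, w, 2, v, 2, A]; rw [Finset.sum_comm]
  conv_lhs => enter [2, w, 2, v]; rw [Finset.sum_comm]
  conv_lhs => enter [2, w, 2, v, 2, u, 2, A]; rw [Finset.sum_comm]
  conv_lhs => enter [2, w, 2, v, 2, u]; rw [Finset.sum_comm]

private lemma aux_S (p : ℕ) [Fact p.Prime] (hp : 3 < p)
    (θ : AddChar (ZMod p) ℂ) (hθ : θ ≠ 1)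
    (l : ZMod p) (hl : l ≠ 0)
    (φ : MulChar (ZMod p) ℂ) (hφ1 : φ ≠ 1) (hφq : φ.IsQuadratic)
    [inst : Fintype (MulChar (ZMod p) ℂ)] :
    (∑ A : MulChar (ZMod p) ℂ, ∑ B : MulChar (ZMod p) ℂ,
        gaussSum A⁻¹ θ * gaussSum B⁻¹ θ * gaussSum (A ^ 3 * B ^ 2) θ *
          gaussSum (A⁻¹ ^ 2 * B⁻¹ * φ) θ * (A ^ 3 * B ^ 2)⁻¹ 2 * A⁻¹ (3 * l))
      = ∑ m : ZMod p, (if m = 0 then 0 else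
          ((p : ℂ) - 1) ^ 2 * (φ ((m ^ 3 + 3 * l * (m + 1) ^ 2) * (3 * l)⁻¹) * gaussSum φ θ)) := by
  obtain rfl : inst = DirichletCharacter.fintype := Subsingleton.elim _ _
  set c : ℂ := (p : ℂ) - 1 with hc
  -- basic nonvanishing
  have h2 : (2 : ZMod p) ≠ 0 := by
    intro h
    have : ((2 : ℕ) : ZMod p) = 0 := by exact_mod_cast h
    rw [ZMod.natCast_eq_zero_iff] at this
    have := Nat.le_of_dvd (by norm_num) this
    omega
  have h3 : (3 : ZMod p) ≠ 0 := by
    intro h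
    have : ((3 : ℕ) : ZMod p) = 0 := by exact_mod_cast h
    rw [ZMod.natCast_eq_zero_iff] at this
    have := Nat.le_of_dvd (by norm_num) this
    omega
  have h3l : (3 : ZMod p) * l ≠ 0 := mul_ne_zero h3 hl
  -- orthogonality
  have horth : ∀ a : ZMod p, ∑ A : MulChar (ZMod p) ℂ, A a = if a = 1 then c else 0 := by
    intro a
    rw [DirichletCharacter.sum_characters_eq ℂ a]
    have : (p.totient : ℂ) = c := by
      rw [Nat.totient_prime Fact.out, hc]
      push_cast [Nat.cast_sub (by omega : 1 ≤ p)]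
      ring
    rw [this]
  -- L1
  have hL1 : ∀ cc : ZMod p, ∑ x : ZMod p, φ x * θ (x * cc) = φ cc * gaussSum φ θ := by
    intro cc
    by_cases hcc : cc = 0
    · simp only [hcc, mul_zero, AddChar.map_zero_eq_one, mul_one, map_zero]
      rw [MulChar.sum_eq_zero_of_ne_one hφ1, MulChar.map_zero, zero_mul]
    · have h1 : φ cc * φ cc = 1 := by
        have h2' := hφq.sq_eq_one
        have h3' : (φ ^ 2) cc = 1 := by rw [h2', MulChar.one_apply (IsUnit.mk0 cc hcc)]
        rwa [MulChar.pow_apply' _ (by norm_num), sq] at h3'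
      have hg := gaussSum_mulShift φ θ (Units.mk0 cc hcc)
      have hms : gaussSum φ (AddChar.mulShift θ (Units.mk0 cc hcc))
          = ∑ x : ZMod p, φ x * θ (x * cc) := by
        simp only [gaussSum, AddChar.mulShift_apply, Units.val_mk0]
        exact Finset.sum_congr rfl fun x _ => by rw [mul_comm cc x]
      rw [hms, Units.val_mk0] at hg
      calc ∑ x : ZMod p, φ x * θ (x * cc)
          = (φ cc * φ cc) * ∑ x : ZMod p, φ x * θ (x * cc) := by rw [h1, one_mul]
        _ = φ cc * gaussSum φ θ := by rw [mul_assoc, hg]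
  -- collapse
  have collapse : ∀ (γ : ZMod p) (Y : ZMod p → ℂ),
      (∑ t : ZMod p, (if t⁻¹ * γ = 1 then c else 0) * Y t)
        = if γ = 0 then 0 else c * Y γ := by
    intro γ Y
    by_cases hγ : γ = 0
    · simp [hγ]
    · have he : ∀ t : ZMod p, (t⁻¹ * γ = 1) ↔ (t = γ) := by
        intro t
        constructor
        · intro h
          have ht : t ≠ 0 := by rintro rfl; simp at h
          exact (inv_mul_eq_one₀ ht).mp h
        · rintro rfl
          exact (inv_mul_eq_one₀ hγ).mpr rfl
      simp only [he, ite_mul, zero_mul, Finset.sum_ite_eq', Finset.mem_univ, if_true, if_neg hγ]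
  -- Step 1: expand each summand into quadruple sums
  have expand : ∀ A B : MulChar (ZMod p) ℂ,
      gaussSum A⁻¹ θ * gaussSum B⁻¹ θ * gaussSum (A ^ 3 * B ^ 2) θ *
          gaussSum (A⁻¹ ^ 2 * B⁻¹ * φ) θ * (A ^ 3 * B ^ 2)⁻¹ 2 * A⁻¹ (3 * l)
        = ∑ w : ZMod p, ∑ v : ZMod p, ∑ u : ZMod p, ∑ t : ZMod p,
            A (t⁻¹ * (v ^ 3 * ((w⁻¹) ^ 2 * ((2⁻¹) ^ 3 * (3 * l)⁻¹))))
              * (B (u⁻¹ * (v ^ 2 * (w⁻¹ * (2⁻¹) ^ 2)))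
                * (φ w * (θ v * (θ w * (θ t * θ u))))) := by
    intro A B
    simp only [gaussSum, Finset.sum_mul, Finset.mul_sum]
    refine Finset.sum_congr rfl fun w _ => Finset.sum_congr rfl fun v _ =>
      Finset.sum_congr rfl fun u _ => Finset.sum_congr rfl fun t _ => ?_
    simp only [MulChar.mul_apply, MulChar.pow_apply' _ (by norm_num : (3:ℕ) ≠ 0),
      MulChar.pow_apply' _ (by norm_num : (2:ℕ) ≠ 0), MulChar.inv_apply', map_mul, map_pow,
      mul_inv]
    ring
  calc (∑ A : MulChar (ZMod p) ℂ, ∑ B : MulChar (ZMod p) ℂ,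
        gaussSum A⁻¹ θ * gaussSum B⁻¹ θ * gaussSum (A ^ 3 * B ^ 2) θ *
          gaussSum (A⁻¹ ^ 2 * B⁻¹ * φ) θ * (A ^ 3 * B ^ 2)⁻¹ 2 * A⁻¹ (3 * l))
      = ∑ w : ZMod p, ∑ v : ZMod p, ∑ u : ZMod p, ∑ t : ZMod p,
          ∑ A : MulChar (ZMod p) ℂ, ∑ B : MulChar (ZMod p) ℂ,
            A (t⁻¹ * (v ^ 3 * ((w⁻¹) ^ 2 * ((2⁻¹) ^ 3 * (3 * l)⁻¹))))
              * (B (u⁻¹ * (v ^ 2 * (w⁻¹ * (2⁻¹) ^ 2)))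
                * (φ w * (θ v * (θ w * (θ t * θ u))))) := by
        rw [Finset.sum_congr rfl fun A _ => Finset.sum_congr rfl fun B _ => expand A B]
        exact sum_swap8 _
    _ = ∑ w : ZMod p, ∑ v : ZMod p, ∑ u : ZMod p, ∑ t : ZMod p,
          (if t⁻¹ * (v ^ 3 * ((w⁻¹) ^ 2 * ((2⁻¹) ^ 3 * (3 * l)⁻¹))) = 1 then c else 0)
            * ((if u⁻¹ * (v ^ 2 * (w⁻¹ * (2⁻¹) ^ 2)) = 1 then c else 0)
              * (φ w * (θ v * (θ w * (θ t * θ u))))) := by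
        refine Finset.sum_congr rfl fun w _ => Finset.sum_congr rfl fun v _ =>
          Finset.sum_congr rfl fun u _ => Finset.sum_congr rfl fun t _ => ?_
        rw [← horth, ← horth]
        rw [Finset.sum_mul]
        refine Finset.sum_congr rfl fun A _ => ?_
        rw [Finset.sum_mul, Finset.mul_sum]
    _ = ∑ w : ZMod p, ∑ v : ZMod p,
          (if v ^ 3 * ((w⁻¹) ^ 2 * ((2⁻¹) ^ 3 * (3 * l)⁻¹)) = 0 then 0 else
            c * (c * (φ w * (θ v * (θ w *
              (θ (v ^ 3 * ((w⁻¹) ^ 2 * ((2⁻¹) ^ 3 * (3 * l)⁻¹)))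
                * θ (v ^ 2 * (w⁻¹ * (2⁻¹) ^ 2)))))))) := by
        refine Finset.sum_congr rfl fun w _ => Finset.sum_congr rfl fun v _ => ?_
        rw [Finset.sum_congr rfl fun u (_ : u ∈ Finset.univ) => collapse
          (v ^ 3 * ((w⁻¹) ^ 2 * ((2⁻¹) ^ 3 * (3 * l)⁻¹)))
          (fun t => (if u⁻¹ * (v ^ 2 * (w⁻¹ * (2⁻¹) ^ 2)) = 1 then c else 0)
            * (φ w * (θ v * (θ w * (θ t * θ u)))))]
        by_cases hγ : v ^ 3 * ((w⁻¹) ^ 2 * ((2⁻¹) ^ 3 * (3 * l)⁻¹)) = 0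
        · rw [Finset.sum_congr rfl fun u (_ : u ∈ Finset.univ) => if_pos hγ,
            Finset.sum_const_zero, if_pos hγ]
        · have hv : v ≠ 0 := by rintro rfl; simp at hγ
          have hw' : w⁻¹ ≠ 0 := by
            intro h; rw [h] at hγ; simp at hγ
          have hδ : v ^ 2 * (w⁻¹ * (2⁻¹) ^ 2) ≠ 0 :=
            mul_ne_zero (pow_ne_zero _ hv)
              (mul_ne_zero hw' (pow_ne_zero _ (inv_ne_zero h2)))
          simp only [if_neg hγ]
          rw [← Finset.mul_sum, collapse (v ^ 2 * (w⁻¹ * (2⁻¹) ^ 2))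
            (fun u => φ w * (θ v * (θ w *
              (θ (v ^ 3 * ((w⁻¹) ^ 2 * ((2⁻¹) ^ 3 * (3 * l)⁻¹))) * θ u)))), if_neg hδ]
    _ = ∑ w : ZMod p, ∑ m : ZMod p,
          (if w = 0 then 0 else (if m = 0 then 0 else
            c * (c * (φ w * θ (w * ((m ^ 3 + 3 * l * (m + 1) ^ 2) * (3 * l)⁻¹)))))) := by
        refine Finset.sum_congr rfl fun w _ => ?_
        by_cases hw : w = 0
        · simp [hw]
        · refine (Fintype.sum_bijective (fun m : ZMod p => 2 * w * m)
            (mulLeft_bijective₀ (2 * w) (mul_ne_zero h2 hw)) _ _ fun m => ?_).symm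
          rw [if_neg hw]
          by_cases hm : m = 0
          · simp [hm]
          · have hvne : 2 * w * m ≠ 0 := mul_ne_zero (mul_ne_zero h2 hw) hm
            have hcond : (2 * w * m) ^ 3 * ((w⁻¹) ^ 2 * ((2⁻¹) ^ 3 * (3 * l)⁻¹)) ≠ 0 :=
              mul_ne_zero (pow_ne_zero _ hvne)
                (mul_ne_zero (pow_ne_zero _ (inv_ne_zero hw))
                  (mul_ne_zero (pow_ne_zero _ (inv_ne_zero h2)) (inv_ne_zero h3l)))
            rw [if_neg hm, if_neg hcond]
            have harg : 2 * w * m + (w +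
                ((2 * w * m) ^ 3 * ((w⁻¹) ^ 2 * ((2⁻¹) ^ 3 * (3 * l)⁻¹))
                  + (2 * w * m) ^ 2 * (w⁻¹ * (2⁻¹) ^ 2)))
                = w * ((m ^ 3 + 3 * l * (m + 1) ^ 2) * (3 * l)⁻¹) := by
              have h96 : (96 : ZMod p) ≠ 0 := by
                have : (96 : ZMod p) = 2 ^ 5 * 3 := by norm_num
                rw [this]
                exact mul_ne_zero (pow_ne_zero _ h2) h3
              field_simp [hw, hl, h2, h3, h96]
              ring
            rw [show (θ (2 * w * m) * (θ w *
                (θ ((2 * w * m) ^ 3 * ((w⁻¹) ^ 2 * ((2⁻¹) ^ 3 * (3 * l)⁻¹)))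
                  * θ ((2 * w * m) ^ 2 * (w⁻¹ * (2⁻¹) ^ 2)))))
                = θ (w * ((m ^ 3 + 3 * l * (m + 1) ^ 2) * (3 * l)⁻¹)) from by
              rw [← AddChar.map_add_eq_mul, ← AddChar.map_add_eq_mul,
                ← AddChar.map_add_eq_mul, harg]]
    _ = ∑ m : ZMod p, (if m = 0 then 0 else
          c ^ 2 * (φ ((m ^ 3 + 3 * l * (m + 1) ^ 2) * (3 * l)⁻¹) * gaussSum φ θ)) := by
        rw [Finset.sum_comm]
        refine Finset.sum_congr rfl fun m _ => ?_
        by_cases hm : m = 0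
        · simp [hm]
        · simp only [if_neg hm]
          have hall : ∀ w : ZMod p, (if w = 0 then 0 else
              c * (c * (φ w * θ (w * ((m ^ 3 + 3 * l * (m + 1) ^ 2) * (3 * l)⁻¹)))))
              = c ^ 2 * (φ w * θ (w * ((m ^ 3 + 3 * l * (m + 1) ^ 2) * (3 * l)⁻¹))) := by
            intro w
            by_cases hw : w = 0
            · simp [hw, MulChar.map_zero]
            · rw [if_neg hw]; ring
          rw [Finset.sum_congr rfl fun w _ => hall w, ← Finset.mul_sum, hL1]

theorem dik_point_count_gauss_sum (p : ℕ) [Fact p.Prime] (hp : 3 < p)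
    (θ : AddChar (ZMod p) ℂ) (hθ : θ ≠ 1)
    (l : ZMod p) (hl : l ≠ 0) :
    letI φ : MulChar (ZMod p) ℂ := (quadraticChar (ZMod p)).ringHomComp (Int.castRingHom ℂ)
    (p : ℂ) * ((Finset.univ.filter (fun xy : ZMod p × ZMod p =>
          xy.2 ^ 2 = xy.1 ^ 3 + 3 * l * (xy.1 + 1) ^ 2)).card : ℂ) =
      (p : ℂ) ^ 2 + (p : ℂ) * φ (3 * l) +
        (φ (-3 * l) * gaussSum φ θ / ((p : ℂ) - 1) ^ 2) *
          ∑ᶠ A : MulChar (ZMod p) ℂ, ∑ᶠ B : MulChar (ZMod p) ℂ,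
            gaussSum A⁻¹ θ * gaussSum B⁻¹ θ * gaussSum (A ^ 3 * B ^ 2) θ *
              gaussSum (A⁻¹ ^ 2 * B⁻¹ * φ) θ * (A ^ 3 * B ^ 2)⁻¹ 2 * A⁻¹ (3 * l) := by
  set φ : MulChar (ZMod p) ℂ := (quadraticChar (ZMod p)).ringHomComp (Int.castRingHom ℂ)
    with hφdef
  have hchar2 : ringChar (ZMod p) ≠ 2 := by rw [ZMod.ringChar_zmod_n]; omega
  have hφ1 : φ ≠ 1 :=
    (MulChar.ringHomComp_ne_one_iff (RingHom.injective_int _)).mpr (quadraticChar_ne_one hchar2)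
  have hφq : φ.IsQuadratic := (quadraticChar_isQuadratic (ZMod p)).comp _
  have h3 : (3 : ZMod p) ≠ 0 := by
    intro h
    have : ((3 : ℕ) : ZMod p) = 0 := by exact_mod_cast h
    rw [ZMod.natCast_eq_zero_iff] at this
    have := Nat.le_of_dvd (by norm_num) this
    omega
  have h3l : (3 : ZMod p) * l ≠ 0 := mul_ne_zero h3 hl
  letI : Fintype (MulChar (ZMod p) ℂ) := DirichletCharacter.fintype
  set c : ℂ := (p : ℂ) - 1 with hcdef
  set g : ℂ := gaussSum φ θ with hgdef
  -- convert finsums to finite sums and apply aux_S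
  have hfin : (∑ᶠ A : MulChar (ZMod p) ℂ, ∑ᶠ B : MulChar (ZMod p) ℂ,
        gaussSum A⁻¹ θ * gaussSum B⁻¹ θ * gaussSum (A ^ 3 * B ^ 2) θ *
          gaussSum (A⁻¹ ^ 2 * B⁻¹ * φ) θ * (A ^ 3 * B ^ 2)⁻¹ 2 * A⁻¹ (3 * l))
      = ∑ A : MulChar (ZMod p) ℂ, ∑ B : MulChar (ZMod p) ℂ,
          gaussSum A⁻¹ θ * gaussSum B⁻¹ θ * gaussSum (A ^ 3 * B ^ 2) θ *
            gaussSum (A⁻¹ ^ 2 * B⁻¹ * φ) θ * (A ^ 3 * B ^ 2)⁻¹ 2 * A⁻¹ (3 * l) := by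
    rw [finsum_eq_sum_of_fintype]
    exact Finset.sum_congr rfl fun A _ => finsum_eq_sum_of_fintype _
  rw [hfin, aux_S p hp θ hθ l hl φ hφ1 hφq]
  -- counting
  rw [aux_count p hp l]
  set S1 : ℂ := ∑ x : ZMod p, φ (x ^ 3 + 3 * l * (x + 1) ^ 2) with hS1
  -- evaluate the m-sum
  have hX0 : φ (((0 : ZMod p) ^ 3 + 3 * l * (0 + 1) ^ 2) * (3 * l)⁻¹) = 1 := by
    have : ((0 : ZMod p) ^ 3 + 3 * l * (0 + 1) ^ 2) * (3 * l)⁻¹ = 1 := by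
      have h00 : ((0 : ZMod p) ^ 3 + 3 * l * (0 + 1) ^ 2) = 3 * l := by ring
      rw [h00, mul_inv_cancel₀ h3l]
    rw [this, MulChar.map_one]
  have hT0 : (∑ m : ZMod p, (if m = 0 then 0 else
      φ ((m ^ 3 + 3 * l * (m + 1) ^ 2) * (3 * l)⁻¹)))
      = S1 * φ ((3 * l)⁻¹) - 1 := by
    have step1 : (∑ m : ZMod p, (if m = 0 then 0 else
        φ ((m ^ 3 + 3 * l * (m + 1) ^ 2) * (3 * l)⁻¹)))
        = (∑ m : ZMod p, φ ((m ^ 3 + 3 * l * (m + 1) ^ 2) * (3 * l)⁻¹))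
          - φ (((0 : ZMod p) ^ 3 + 3 * l * (0 + 1) ^ 2) * (3 * l)⁻¹) := by
      rw [Finset.sum_congr rfl fun m (_ : m ∈ Finset.univ) =>
        show (if m = 0 then 0 else φ ((m ^ 3 + 3 * l * (m + 1) ^ 2) * (3 * l)⁻¹))
          = φ ((m ^ 3 + 3 * l * (m + 1) ^ 2) * (3 * l)⁻¹)
            - (if m = 0 then φ ((m ^ 3 + 3 * l * (m + 1) ^ 2) * (3 * l)⁻¹) else 0) by
          by_cases hm : m = 0 <;> simp [hm]]
      rw [Finset.sum_sub_distrib]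
      congr 1
      rw [Finset.sum_ite_eq' Finset.univ (0 : ZMod p)
        (fun m => φ ((m ^ 3 + 3 * l * (m + 1) ^ 2) * (3 * l)⁻¹))]
      simp
    rw [step1, hX0]
    congr 1
    rw [Finset.sum_congr rfl fun m (_ : m ∈ Finset.univ) => map_mul φ _ _, ← Finset.sum_mul]
  have hsum2 : (∑ m : ZMod p, (if m = 0 then 0 else
      ((p : ℂ) - 1) ^ 2 * (φ ((m ^ 3 + 3 * l * (m + 1) ^ 2) * (3 * l)⁻¹) * gaussSum φ θ)))
      = ((p : ℂ) - 1) ^ 2 * ((S1 * φ ((3 * l)⁻¹) - 1) * gaussSum φ θ) := by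
    rw [Finset.sum_congr rfl fun m (_ : m ∈ Finset.univ) =>
      show (if m = 0 then 0 else
          ((p : ℂ) - 1) ^ 2 * (φ ((m ^ 3 + 3 * l * (m + 1) ^ 2) * (3 * l)⁻¹) * gaussSum φ θ))
        = ((p : ℂ) - 1) ^ 2 * ((if m = 0 then 0 else
            φ ((m ^ 3 + 3 * l * (m + 1) ^ 2) * (3 * l)⁻¹)) * gaussSum φ θ) from by
        by_cases hm : m = 0 <;> simp [hm]]
    rw [← Finset.mul_sum]
    congr 1
    rw [← Finset.sum_mul, hT0]
  rw [hsum2]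
  have hc0 : c ≠ 0 := by
    rw [hcdef]
    intro h
    have h1 : (p : ℂ) = ((1 : ℕ) : ℂ) := by push_cast; linear_combination h
    have : p = 1 := Nat.cast_injective h1
    omega
  have hdiv : φ (-3 * l) * g / c ^ 2 * (((p : ℂ) - 1) ^ 2 * ((S1 * φ ((3 * l)⁻¹) - 1) * gaussSum φ θ))
      = φ (-3 * l) * g * ((S1 * φ ((3 * l)⁻¹) - 1) * g) := by
    rw [← hcdef, ← hgdef]
    field_simp
  rw [hdiv]
  have hone : (-1 : ZMod p) ≠ 0 := by
    intro h
    have : (1 : ZMod p) = 0 := by linear_combination -h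
    simp at this
  have h1 : φ (-3 * l) * φ ((3 * l)⁻¹) = φ (-1) := by
    rw [← map_mul]
    congr 1
    rw [show (-3 * l : ZMod p) = -(3 * l) by ring, neg_mul, mul_inv_cancel₀ h3l]
  have h2g : g ^ 2 = φ (-1) * (p : ℂ) := by
    rw [hgdef, gaussSum_sq hφ1 hφq (AddChar.IsPrimitive.of_ne_one hθ), ZMod.card]
  have h3q : φ (-1) * φ (-1) = 1 := by
    have h2' := hφq.sq_eq_one
    have h3' : (φ ^ 2) (-1) = 1 := by rw [h2', MulChar.one_apply (IsUnit.mk0 (-1 : ZMod p) hone)]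
    rwa [MulChar.pow_apply' _ (by norm_num), sq] at h3'
  have h4 : φ (-3 * l) * φ (-1) = φ (3 * l) := by
    rw [← map_mul]
    congr 1
    ring
  linear_combination (-(g ^ 2 * S1)) * h1 + (φ (-3 * l) - φ (-1) * S1) * h2g
    + (-((p : ℂ) * S1)) * h3q + (p : ℂ) * h4
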